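/- arXiv:2309.03818 — 3 statements merged into one kernel-verified Lean document; each statement's English description precedes it below -/
import Mathlib

section
/- Fix ε ∈ (0,1), set p = 1+ε, and let C > 0. There exists a non-decreasing function φ: ℝ → ℝ satisfying −log(1 − x + C·|x|^p) ≤ φ(x) ≤ log(1 + x + C·|x|^p) for all x ∈ ℝ if and only if C ≥ (ε/(1+ε))^((1+ε)/2) · ((1−ε)/ε)^((1−ε)/2) (with the convention 0^0 = 1). -/
open Real Set

noncomputable def Cst (ε : ℝ) : ℝ := (ε / (1 + ε)) ^ ((1 + ε) / 2) * ((1 - ε) / ε) ^ ((1 - ε) / 2)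

lemma Cst_pos {ε : ℝ} (h0 : 0 < ε) (h1 : ε < 1) : 0 < Cst ε := by
  have ha : (0:ℝ) < 1 - ε := by linarith
  have hb : (0:ℝ) < 1 + ε := by linarith
  unfold Cst
  positivity

lemma Kident {ε : ℝ} (h0 : 0 < ε) (h1 : ε < 1) :
    ((1 + ε) / (1 - ε)) ^ ((1 - ε) / 2) * ((1 + ε) / (2 * ε)) ^ ε * (Cst ε * (2:ℝ) ^ ε) = 1 := by
  have ha : (0:ℝ) < 1 - ε := by linarith
  have hb : (0:ℝ) < 1 + ε := by linarith
  have h2 : (0:ℝ) < 2 := by norm_num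
  have hc := Cst_pos h0 h1
  have hA : (0:ℝ) < ((1 + ε) / (1 - ε)) ^ ((1 - ε) / 2) := Real.rpow_pos_of_pos (by positivity) _
  have hB : (0:ℝ) < ((1 + ε) / (2 * ε)) ^ ε := Real.rpow_pos_of_pos (by positivity) _
  have hD : (0:ℝ) < (2:ℝ) ^ ε := Real.rpow_pos_of_pos h2 _
  have hL : (0:ℝ) < ((1 + ε) / (1 - ε)) ^ ((1 - ε) / 2) * ((1 + ε) / (2 * ε)) ^ ε *
      (Cst ε * (2:ℝ) ^ ε) := by positivity
  have hlog : Real.log (((1 + ε) / (1 - ε)) ^ ((1 - ε) / 2) * ((1 + ε) / (2 * ε)) ^ ε *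
      (Cst ε * (2:ℝ) ^ ε)) = 0 := by
    rw [Real.log_mul (by positivity) (by positivity),
        Real.log_mul hA.ne' hB.ne',
        Real.log_mul hc.ne' hD.ne',
        Real.log_rpow (by positivity), Real.log_rpow (by positivity), Real.log_rpow h2]
    unfold Cst
    rw [Real.log_mul (Real.rpow_pos_of_pos (by positivity) _).ne'
          (Real.rpow_pos_of_pos (by positivity) _).ne',
        Real.log_rpow (by positivity), Real.log_rpow (by positivity),
        Real.log_div hb.ne' ha.ne', Real.log_div hb.ne' (by positivity),
        Real.log_div h0.ne' hb.ne', Real.log_div ha.ne' h0.ne',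
        Real.log_mul h2.ne' h0.ne']
    ring
  calc ((1 + ε) / (1 - ε)) ^ ((1 - ε) / 2) * ((1 + ε) / (2 * ε)) ^ ε * (Cst ε * (2:ℝ) ^ ε)
      = Real.exp (Real.log (((1 + ε) / (1 - ε)) ^ ((1 - ε) / 2) * ((1 + ε) / (2 * ε)) ^ ε *
        (Cst ε * (2:ℝ) ^ ε))) := (Real.exp_log hL).symm
    _ = Real.exp 0 := by rw [hlog]
    _ = 1 := Real.exp_zero

lemma core {ε : ℝ} (h0 : 0 < ε) (h1 : ε < 1) {r : ℝ} (hr0 : 0 < r) (hr1 : r < 1) :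
    r ^ ((1 - ε) / 2) * (1 - r) ^ ε ≤ Cst ε * (2:ℝ) ^ ε := by
  have ha : (0:ℝ) < 1 - ε := by linarith
  have hb : (0:ℝ) < 1 + ε := by linarith
  have hr1' : (0:ℝ) < 1 - r := by linarith
  set w₁ : ℝ := (1 - ε) / (1 + ε) with hw₁
  set w₂ : ℝ := (2 * ε) / (1 + ε) with hw₂
  set p₁ : ℝ := r * ((1 + ε) / (1 - ε)) with hp₁
  set p₂ : ℝ := (1 - r) * ((1 + ε) / (2 * ε)) with hp₂
  have hp₁0 : 0 < p₁ := by positivity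
  have hp₂0 : 0 < p₂ := by positivity
  have hsum : w₁ + w₂ = 1 := by rw [hw₁, hw₂, ← add_div, div_eq_one_iff_eq hb.ne']; ring
  have hgm : p₁ ^ w₁ * p₂ ^ w₂ ≤ 1 := by
    have h := Real.geom_mean_le_arith_mean2_weighted (by positivity) (by positivity)
      hp₁0.le hp₂0.le hsum
    have harith : w₁ * p₁ + w₂ * p₂ = 1 := by
      rw [hw₁, hw₂, hp₁, hp₂]; field_simp; ring
    linarith
  have hpow : (p₁ ^ w₁ * p₂ ^ w₂) ^ ((1 + ε) / 2) ≤ 1 := by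
    calc (p₁ ^ w₁ * p₂ ^ w₂) ^ ((1 + ε) / 2) ≤ 1 ^ ((1 + ε) / 2) :=
          Real.rpow_le_rpow
            (mul_nonneg (Real.rpow_nonneg hp₁0.le _) (Real.rpow_nonneg hp₂0.le _))
            hgm (by positivity)
      _ = 1 := Real.one_rpow _
  have e₁ : w₁ * ((1 + ε) / 2) = (1 - ε) / 2 := by rw [hw₁]; field_simp
  have e₂ : w₂ * ((1 + ε) / 2) = ε := by rw [hw₂]; field_simp
  have hexp : (p₁ ^ w₁ * p₂ ^ w₂) ^ ((1 + ε) / 2) = p₁ ^ ((1 - ε) / 2) * p₂ ^ ε := by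
    rw [Real.mul_rpow (Real.rpow_nonneg hp₁0.le _) (Real.rpow_nonneg hp₂0.le _),
        ← Real.rpow_mul hp₁0.le, ← Real.rpow_mul hp₂0.le, e₁, e₂]
  rw [hexp] at hpow
  have hsplit : p₁ ^ ((1 - ε) / 2) * p₂ ^ ε =
      (r ^ ((1 - ε) / 2) * (1 - r) ^ ε) *
      (((1 + ε) / (1 - ε)) ^ ((1 - ε) / 2) * ((1 + ε) / (2 * ε)) ^ ε) := by
    rw [hp₁, hp₂, Real.mul_rpow hr0.le (by positivity), Real.mul_rpow hr1'.le (by positivity)]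
    ring
  rw [hsplit] at hpow
  have hK := Kident h0 h1
  set K := ((1 + ε) / (1 - ε)) ^ ((1 - ε) / 2) * ((1 + ε) / (2 * ε)) ^ ε with hKdef
  set X := r ^ ((1 - ε) / 2) * (1 - r) ^ ε with hX
  have hc2 : (0:ℝ) ≤ Cst ε * (2:ℝ) ^ ε := by
    have := Cst_pos h0 h1
    positivity
  calc X = X * (K * (Cst ε * (2:ℝ) ^ ε)) := by rw [hK, mul_one]
    _ = (X * K) * (Cst ε * (2:ℝ) ^ ε) := by ring
    _ ≤ 1 * (Cst ε * (2:ℝ) ^ ε) := mul_le_mul_of_nonneg_right hpow hc2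
    _ = Cst ε * (2:ℝ) ^ ε := one_mul _

lemma key {ε : ℝ} (h0 : 0 < ε) (h1 : ε < 1) {s : ℝ} (hs : 1 < s) :
    s - 1 ≤ Cst ε * ((s - 1) * (s + 1)) ^ ((1 + ε) / 2) := by
  have hs1 : (0:ℝ) < s - 1 := by linarith
  have hs2 : (0:ℝ) < s + 1 := by linarith
  set r : ℝ := (s - 1) / (s + 1) with hrdef
  have hr0 : 0 < r := div_pos hs1 hs2
  have hr1 : r < 1 := (div_lt_one hs2).2 (by linarith)
  have hsr : s - 1 = r * (s + 1) := by rw [hrdef]; field_simp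
  have h1r : 1 - r = 2 / (s + 1) := by rw [hrdef]; field_simp; ring
  -- rewrite the rpow term
  have hA : ((s - 1) * (s + 1)) ^ ((1 + ε) / 2)
      = r ^ ((1 + ε) / 2) * ((s + 1) * (s + 1) ^ ε) := by
    have e1 : (s - 1) * (s + 1) = r * (s + 1) ^ (2:ℝ) := by
      rw [hsr, Real.rpow_two]; ring
    rw [e1, Real.mul_rpow hr0.le (Real.rpow_nonneg hs2.le _), ← Real.rpow_mul hs2.le]
    congr 1
    rw [show (2:ℝ) * ((1 + ε) / 2) = 1 + ε by ring, Real.rpow_add hs2, Real.rpow_one]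
  have hcore := core h0 h1 hr0 hr1
  -- from core:  r^((1-ε)/2) ≤ Cst ε * (s+1)^ε
  have h2e : (0:ℝ) < (2:ℝ) ^ ε := Real.rpow_pos_of_pos (by norm_num) _
  have hse : (0:ℝ) < (s + 1) ^ ε := Real.rpow_pos_of_pos hs2 _
  have h1re : (1 - r) ^ ε = 2 ^ ε / (s + 1) ^ ε := by
    rw [h1r, Real.div_rpow (by norm_num) hs2.le]
  have hstep : r ^ ((1 - ε) / 2) ≤ Cst ε * (s + 1) ^ ε := by
    rw [h1re] at hcore
    have := mul_le_mul_of_nonneg_right hcore (le_of_lt (by positivity : (0:ℝ) < (s+1)^ε / 2^ε))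
    calc r ^ ((1 - ε) / 2)
        = r ^ ((1 - ε) / 2) * (2 ^ ε / (s + 1) ^ ε) * ((s + 1) ^ ε / 2 ^ ε) := by
          field_simp
      _ ≤ Cst ε * 2 ^ ε * ((s + 1) ^ ε / 2 ^ ε) := this
      _ = Cst ε * (s + 1) ^ ε := by field_simp
  -- combine
  have hrsplit : r = r ^ ((1 - ε) / 2) * r ^ ((1 + ε) / 2) := by
    rw [← Real.rpow_add hr0, show (1 - ε) / 2 + (1 + ε) / 2 = 1 by ring, Real.rpow_one]
  calc s - 1 = r * (s + 1) := hsr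
    _ = r ^ ((1 - ε) / 2) * (r ^ ((1 + ε) / 2) * (s + 1)) := by
        conv_lhs => rw [hrsplit]
        ring
    _ ≤ (Cst ε * (s + 1) ^ ε) * (r ^ ((1 + ε) / 2) * (s + 1)) := by
        apply mul_le_mul_of_nonneg_right hstep
        positivity
    _ = Cst ε * (r ^ ((1 + ε) / 2) * ((s + 1) * (s + 1) ^ ε)) := by ring
    _ = Cst ε * ((s - 1) * (s + 1)) ^ ((1 + ε) / 2) := by rw [hA]

lemma diag {ε : ℝ} (h0 : 0 < ε) (h1 : ε < 1) {C : ℝ} (hC : Cst ε ≤ C) (x : ℝ) :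
    1 + x ^ 2 ≤ (1 + C * |x| ^ (1 + ε)) ^ 2 := by
  have hCpos : 0 < C := lt_of_lt_of_le (Cst_pos h0 h1) hC
  rcases eq_or_ne x 0 with rfl | hx
  · simp [Real.zero_rpow (by positivity : (0:ℝ) < 1 + ε).ne']
  · have ht : 0 < |x| := abs_pos.2 hx
    set t := |x| with htdef
    have hs0 : (0:ℝ) < 1 + t ^ 2 := by positivity
    set s := Real.sqrt (1 + t ^ 2) with hsdef
    have hs1 : 1 < s := by
      rw [hsdef]
      have : (1:ℝ) = Real.sqrt 1 := (Real.sqrt_one).symm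
      rw [this]
      exact Real.sqrt_lt_sqrt (by norm_num) (by nlinarith)
    have hssq : s ^ 2 = 1 + t ^ 2 := Real.sq_sqrt hs0.le
    have htt : (s - 1) * (s + 1) = t ^ 2 := by nlinarith
    have hkey := key h0 h1 (s := s) hs1
    have hT : ((s - 1) * (s + 1)) ^ ((1 + ε) / 2) = t ^ (1 + ε) := by
      rw [htt, ← Real.rpow_two, ← Real.rpow_mul ht.le,
        show (2:ℝ) * ((1 + ε) / 2) = 1 + ε by ring]
    rw [hT] at hkey
    have hCs : Cst ε * t ^ (1 + ε) ≤ C * t ^ (1 + ε) :=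
      mul_le_mul_of_nonneg_right hC (Real.rpow_nonneg ht.le _)
    have hfin : s ≤ 1 + C * t ^ (1 + ε) := by linarith
    calc 1 + x ^ 2 = 1 + t ^ 2 := by rw [htdef, sq_abs]
      _ = s ^ 2 := hssq.symm
      _ ≤ (1 + C * t ^ (1 + ε)) ^ 2 := by
          apply pow_le_pow_left₀ (Real.sqrt_nonneg _) hfin

lemma t0fact {ε : ℝ} (h0 : 0 < ε) (h1 : ε < 1) :
    Cst ε * (Real.sqrt (1 - ε ^ 2) / ε) ^ (1 + ε) = (1 - ε) / ε := by
  have ha : (0:ℝ) < 1 - ε := by linarith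
  have hb : (0:ℝ) < 1 + ε := by linarith
  have he2 : (0:ℝ) < 1 - ε ^ 2 := by nlinarith
  have ht0 : (0:ℝ) < Real.sqrt (1 - ε ^ 2) / ε := div_pos (Real.sqrt_pos.2 he2) h0
  have hc := Cst_pos h0 h1
  have hLpos : (0:ℝ) < Cst ε * (Real.sqrt (1 - ε ^ 2) / ε) ^ (1 + ε) :=
    mul_pos hc (Real.rpow_pos_of_pos ht0 _)
  have hRpos : (0:ℝ) < (1 - ε) / ε := div_pos ha h0
  rw [← Real.exp_log hLpos, ← Real.exp_log hRpos]
  congr 1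
  rw [Real.log_mul hc.ne' (Real.rpow_pos_of_pos ht0 _).ne', Real.log_rpow ht0,
      Real.log_div (Real.sqrt_pos.2 he2).ne' h0.ne', Real.log_sqrt he2.le,
      show (1:ℝ) - ε ^ 2 = (1 - ε) * (1 + ε) by ring, Real.log_mul ha.ne' hb.ne']
  unfold Cst
  rw [Real.log_mul (Real.rpow_pos_of_pos (by positivity) _).ne'
        (Real.rpow_pos_of_pos (by positivity) _).ne',
      Real.log_rpow (by positivity), Real.log_rpow (by positivity),
      Real.log_div h0.ne' hb.ne', Real.log_div ha.ne' h0.ne']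
  ring

/-- Fix `ε ∈ (0,1)`, set `p = 1+ε`, and let `C > 0`. There exists a
non-decreasing function `φ : ℝ → ℝ` satisfying
`-log (1 - x + C|x|^p) ≤ φ x ≤ log (1 + x + C|x|^p)` for all `x`
if and only if `C ≥ (ε/(1+ε))^((1+ε)/2) * ((1-ε)/ε)^((1-ε)/2)`. -/
theorem stmt0 (ε : ℝ) (hε : ε ∈ Set.Ioo (0 : ℝ) 1) (C : ℝ) (hC : 0 < C) :
    (∃ φ : ℝ → ℝ, Monotone φ ∧ ∀ x : ℝ,
        -Real.log (1 - x + C * |x| ^ (1 + ε)) ≤ φ x ∧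
        φ x ≤ Real.log (1 + x + C * |x| ^ (1 + ε))) ↔
      (ε / (1 + ε)) ^ ((1 + ε) / 2) * ((1 - ε) / ε) ^ ((1 - ε) / 2) ≤ C := by
  obtain ⟨hε0, hε1⟩ := hε
  have hpe : (0:ℝ) < 1 + ε := by linarith
  have hrn : ∀ t : ℝ, (0:ℝ) ≤ |t| ^ (1 + ε) := fun t => Real.rpow_nonneg (abs_nonneg t) _
  -- abbreviations
  let u : ℝ → ℝ := fun t => 1 + t + C * |t| ^ (1 + ε)
  have hud : ∀ t, u t = 1 + t + C * |t| ^ (1 + ε) := fun t => rfl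
  have humono : ∀ a b, 0 ≤ a → a ≤ b → u a ≤ u b := by
    intro a b ha0 hab
    have habs : |a| ^ (1 + ε) ≤ |b| ^ (1 + ε) := by
      apply Real.rpow_le_rpow (abs_nonneg a) _ hpe.le
      rw [abs_of_nonneg ha0, abs_of_nonneg (ha0.trans hab)]; exact hab
    have := mul_le_mul_of_nonneg_left habs hC.le
    rw [hud, hud]; linarith
  have hu1 : ∀ t, 0 ≤ t → 1 ≤ u t := by
    intro t ht
    have := hrn t
    rw [hud]; nlinarith
  constructor
  · rintro ⟨φ, hmono, hbd⟩
    show Cst ε ≤ C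
    -- Claim A : 1 - t + C t^p > 0 for t > 0
    have claimA : ∀ t, 0 < t → 0 < 1 - t + C * |t| ^ (1 + ε) := by
      intro t ht
      by_contra hneg
      push_neg at hneg
      have hut : 1 ≤ u t := hu1 t ht.le
      set δ : ℝ := (2 * u t)⁻¹ with hδ
      have hδ0 : 0 < δ := by rw [hδ]; positivity
      have hδ1 : δ < 1 := by rw [hδ]; exact inv_lt_one_of_one_lt₀ (by linarith)
      have hcont : ContinuousOn (fun y : ℝ => 1 - y + C * |y| ^ (1 + ε)) (Icc 0 t) := by
        apply Continuous.continuousOn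
        exact (continuous_const.sub continuous_id).add
          (continuous_const.mul (continuous_abs.rpow_const fun x => Or.inr hpe.le))
      have hv0 : 1 - (0:ℝ) + C * |(0:ℝ)| ^ (1 + ε) = 1 := by
        simp [Real.zero_rpow hpe.ne']
      have hmem : δ ∈ Icc (1 - t + C * |t| ^ (1 + ε)) (1 - (0:ℝ) + C * |(0:ℝ)| ^ (1 + ε)) := by
        constructor
        · linarith
        · rw [hv0]; linarith
      obtain ⟨t₁, ⟨ht₁0, ht₁t⟩, ht₁⟩ := intermediate_value_Icc' ht.le hcont hmem
      have h1 := (hbd t₁).1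
      have h2 := (hbd t₁).2
      have ht₁' : 1 - t₁ + C * |t₁| ^ (1 + ε) = δ := ht₁
      rw [ht₁'] at h1
      have hut₁pos : 0 < u t₁ := lt_of_lt_of_le one_pos (hu1 t₁ ht₁0)
      have h3 : Real.log (u t₁) ≤ Real.log (u t) :=
        (Real.log_le_log_iff hut₁pos (by linarith)).2 (humono _ _ ht₁0 ht₁t)
      have hlogv : -Real.log δ = Real.log (2 * u t) := by
        rw [hδ, Real.log_inv]; ring
      have hlt : Real.log (u t) < Real.log (2 * u t) :=
        Real.log_lt_log (by linarith) (by linarith)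
      have h2' : φ t₁ ≤ Real.log (u t₁) := h2
      linarith
    -- evaluate at t₀
    set t₀ : ℝ := Real.sqrt (1 - ε ^ 2) / ε with ht₀def
    have he2 : (0:ℝ) < 1 - ε ^ 2 := by nlinarith
    have ht₀ : 0 < t₀ := div_pos (Real.sqrt_pos.2 he2) hε0
    have habs : |t₀| = t₀ := abs_of_pos ht₀
    have hvt₀ : 0 < 1 - t₀ + C * |t₀| ^ (1 + ε) := claimA t₀ ht₀
    have hut₀ : 0 < u t₀ := lt_of_lt_of_le one_pos (hu1 t₀ ht₀.le)
    have h1 := (hbd t₀).1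
    have h2 := (hbd t₀).2
    have h2' : φ t₀ ≤ Real.log (u t₀) := h2
    have hlog : 0 ≤ Real.log (1 - t₀ + C * |t₀| ^ (1 + ε)) + Real.log (u t₀) := by linarith
    have hprod : 1 ≤ (1 - t₀ + C * |t₀| ^ (1 + ε)) * u t₀ := by
      rw [← Real.log_nonneg_iff (mul_pos hvt₀ hut₀), Real.log_mul hvt₀.ne' hut₀.ne']
      exact hlog
    have ht₀sq : 1 + t₀ ^ 2 = (1 / ε) ^ 2 := by
      rw [ht₀def, div_pow, Real.sq_sqrt he2.le]
      field_simp; ring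
    have hsq : (1 / ε) ^ 2 ≤ (1 + C * t₀ ^ (1 + ε)) ^ 2 := by
      have hexp : (1 - t₀ + C * |t₀| ^ (1 + ε)) * u t₀
          = (1 + C * t₀ ^ (1 + ε)) ^ 2 - t₀ ^ 2 := by
        rw [hud, habs]; ring
      nlinarith [hprod, ht₀sq, hexp]
    have hrp : (0:ℝ) < t₀ ^ (1 + ε) := Real.rpow_pos_of_pos ht₀ _
    have hle : 1 / ε ≤ 1 + C * t₀ ^ (1 + ε) := by
      by_contra h
      push_neg at h
      have hb : (0:ℝ) < 1 + C * t₀ ^ (1 + ε) := by positivity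
      have h2m := mul_self_lt_mul_self hb.le h
      nlinarith [hsq, h2m]
    have hCt : (1 - ε) / ε ≤ C * t₀ ^ (1 + ε) := by
      have : (1 - ε) / ε = 1 / ε - 1 := by field_simp
      linarith [this]
    have ht0f : Cst ε * t₀ ^ (1 + ε) = (1 - ε) / ε := t0fact hε0 hε1
    have hfin : Cst ε * t₀ ^ (1 + ε) ≤ C * t₀ ^ (1 + ε) := by rw [ht0f]; exact hCt
    exact le_of_mul_le_mul_right hfin hrp
  · intro hCge
    have hCs : Cst ε ≤ C := hCge
    have hdiag : ∀ x : ℝ, 1 ≤ u (-x) * u x := by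
      intro x
      have hd := diag hε0 hε1 hCs x
      rw [hud, hud, abs_neg]
      nlinarith [hd]
    have hupos : ∀ x, 0 < u x := by
      intro x
      rcases le_or_gt 0 x with h | h
      · exact lt_of_lt_of_le one_pos (hu1 x h)
      · have h1 : 0 < u (-x) := lt_of_lt_of_le one_pos (hu1 (-x) (by linarith))
        nlinarith [hdiag x, h1]
    have hcross : ∀ y x : ℝ, y ≤ x → 1 ≤ u (-y) * u x := by
      intro y x hyx
      rcases lt_or_ge x 0 with hx | hx
      · have hm : u (-x) ≤ u (-y) := humono _ _ (by linarith) (by linarith)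
        calc (1:ℝ) ≤ u (-x) * u x := hdiag x
          _ ≤ u (-y) * u x := mul_le_mul_of_nonneg_right hm (hupos x).le
      · rcases lt_or_ge 0 y with hy | hy
        · have hm : u y ≤ u x := humono _ _ hy.le hyx
          calc (1:ℝ) ≤ u (-y) * u y := hdiag y
            _ ≤ u (-y) * u x := mul_le_mul_of_nonneg_left hm (hupos _).le
        · have h1 : 1 ≤ u (-y) := hu1 _ (by linarith)
          have h2 : 1 ≤ u x := hu1 _ hx
          nlinarith
    have hgb : ∀ y x : ℝ, y ≤ x → -Real.log (u (-y)) ≤ Real.log (u x) := by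
      intro y x hyx
      have h := Real.log_nonneg (hcross y x hyx)
      rw [Real.log_mul (hupos _).ne' (hupos _).ne'] at h
      linarith
    have hbdd : ∀ x : ℝ, BddAbove ((fun y => -Real.log (u (-y))) '' Iic x) := by
      intro x
      exact ⟨Real.log (u x), by rintro w ⟨y, hy, rfl⟩; exact hgb y x hy⟩
    have hne : ∀ x : ℝ, ((fun y => -Real.log (u (-y))) '' Iic x).Nonempty :=
      fun x => ⟨_, ⟨x, mem_Iic.2 le_rfl, rfl⟩⟩
    refine ⟨fun x => sSup ((fun y => -Real.log (u (-y))) '' Iic x), ?_, ?_⟩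
    · intro a b hab
      exact csSup_le_csSup (hbdd b) (hne a) (Set.image_mono (Iic_subset_Iic.2 hab))
    · intro x
      constructor
      · have hx := le_csSup (hbdd x) ⟨x, mem_Iic.2 le_rfl, rfl⟩
        have heq : -Real.log (u (-x)) = -Real.log (1 - x + C * |x| ^ (1 + ε)) := by
          rw [hud, abs_neg, show 1 + -x + C * |x| ^ (1 + ε) = 1 - x + C * |x| ^ (1 + ε) by ring]
        exact le_trans (le_of_eq heq.symm) hx
      · apply csSup_le (hne x)
        rintro w ⟨y, hy, rfl⟩
        exact hgb y x hy
end

section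
/- Let x₁,…,x_n ∈ 𝒳, α > 0, let φ: ℝ → ℝ be continuously differentiable, and let (w,x) ↦ f_w(x) be such that w ↦ f_w(xᵢ) is differentiable on ℝ^d for each i. Suppose μ̂: ℝ^d → ℝ is differentiable and satisfies Σ_{i=1}^n φ(α(f_w(xᵢ) − μ̂(w))) = 0 for all w, and that Σ_{i=1}^n φ′(α(f_w(xᵢ) − μ̂(w))) ≠ 0. Then the gradient of μ̂ is the weighted average ∇_w μ̂(w) = [ Σᵢ φ′(α(f_w(xᵢ) − μ̂(w)))·∇_w f_w(xᵢ) ] / [ Σᵢ φ′(α(f_w(xᵢ) − μ̂(w))) ]. In particular, if ŵ is an interior minimizer of w ↦ μ̂(w), then ∇_w μ̂(ŵ) = 0. -/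
open InnerProductSpace

/-- If `μ̂(w)` is implicitly defined by
`∑ᵢ φ(α (f_w(xᵢ) - μ̂(w))) = 0`, then its gradient is the weighted average
`∇μ̂(w) = (∑ᵢ φ'(α(f_w(xᵢ) - μ̂(w))) ∇_w f_w(xᵢ)) / (∑ᵢ φ'(α(f_w(xᵢ) - μ̂(w))))`;
in particular at any interior (local) minimizer `ŵ` of `μ̂` one has `∇μ̂(ŵ) = 0`. -/
theorem stmt18 {𝒳 : Type*} (d n : ℕ) (x : Fin n → 𝒳) (α : ℝ) (hα : 0 < α)
    (φ : ℝ → ℝ) (hφ : ContDiff ℝ 1 φ)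
    (f : EuclideanSpace ℝ (Fin d) → 𝒳 → ℝ)
    (hf : ∀ i, Differentiable ℝ (fun w => f w (x i)))
    (muhat : EuclideanSpace ℝ (Fin d) → ℝ) (hmu : Differentiable ℝ muhat)
    (hroot : ∀ w, ∑ i, φ (α * (f w (x i) - muhat w)) = 0)
    (hne : ∀ w, ∑ i, deriv φ (α * (f w (x i) - muhat w)) ≠ 0) :
    (∀ w, gradient muhat w =
      (∑ i, deriv φ (α * (f w (x i) - muhat w)))⁻¹ •
        ∑ i, deriv φ (α * (f w (x i) - muhat w)) • gradient (fun w' => f w' (x i)) w) ∧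
    (∀ what, IsLocalMin muhat what → gradient muhat what = 0) := by
  constructor
  · intro w
    set c : Fin n → ℝ := fun i => deriv φ (α * (f w (x i) - muhat w)) with hc
    set D : EuclideanSpace ℝ (Fin d) →L[ℝ] ℝ := fderiv ℝ muhat w with hD
    set Di : Fin n → (EuclideanSpace ℝ (Fin d) →L[ℝ] ℝ) :=
      fun i => fderiv ℝ (fun w' => f w' (x i)) w with hDi
    -- derivative of the inner function
    have hFi : ∀ i, HasFDerivAt (fun w' => α * (f w' (x i) - muhat w'))
        (α • (Di i - D)) w := by
      intro i
      exact ((((hf i) w).hasFDerivAt).sub ((hmu w).hasFDerivAt)).const_smul α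
    have hcomp : ∀ i, HasFDerivAt (fun w' => φ (α * (f w' (x i) - muhat w')))
        ((c i) • (α • (Di i - D))) w := by
      intro i
      exact ((hφ.differentiable one_ne_zero _).hasDerivAt).comp_hasFDerivAt w (hFi i)
    have hsum : HasFDerivAt (fun w' => ∑ i, φ (α * (f w' (x i) - muhat w')))
        (∑ i, (c i) • (α • (Di i - D))) w := HasFDerivAt.fun_sum (fun i _ => hcomp i)
    have hzero : (∑ i, (c i) • (α • (Di i - D))) = 0 := by
      have h0 : HasFDerivAt (fun w' : EuclideanSpace ℝ (Fin d) =>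
          ∑ i, φ (α * (f w' (x i) - muhat w'))) (0 : EuclideanSpace ℝ (Fin d) →L[ℝ] ℝ) w :=
        by
          have heq : (fun w' : EuclideanSpace ℝ (Fin d) =>
              ∑ i, φ (α * (f w' (x i) - muhat w'))) = fun _ => (0 : ℝ) := funext hroot
          rw [heq]; exact hasFDerivAt_const 0 w
      exact hsum.unique h0
    -- rearrange
    have key : (∑ i, c i) • D = ∑ i, (c i) • Di i := by
      have expand : ∑ i, (c i) • (α • (Di i - D))
          = α • ((∑ i, (c i) • Di i) - (∑ i, c i) • D) := by
        calc ∑ i, (c i) • (α • (Di i - D))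
            = ∑ i, (α • ((c i) • Di i) - α • ((c i) • D)) :=
              Finset.sum_congr rfl (fun i _ => by module)
          _ = α • (∑ i, (c i) • Di i) - α • (∑ i, (c i) • D) := by
              rw [Finset.sum_sub_distrib, Finset.smul_sum, Finset.smul_sum]
          _ = α • ((∑ i, (c i) • Di i) - (∑ i, c i) • D) := by
              rw [Finset.sum_smul, smul_sub]
      rw [expand] at hzero
      rcases smul_eq_zero.mp hzero with h | h
      · exact absurd h (ne_of_gt hα)
      · exact (sub_eq_zero.mp h).symm
    have hD' : D = (∑ i, c i)⁻¹ • ∑ i, (c i) • Di i := by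
      rw [← key, smul_smul, inv_mul_cancel₀ (hne w), one_smul]
    show (toDual ℝ (EuclideanSpace ℝ (Fin d))).symm D = _
    rw [hD', map_smul, map_sum]
    simp only [map_smul]
    rfl
  · intro what hmin
    have : fderiv ℝ muhat what = 0 := hmin.fderiv_eq_zero
    simp [gradient, this]
end

section
/- Let F: ℝ^d → ℝ be differentiable with L-Lipschitz gradient and κ-strongly convex, with (unique) minimizer w*. Let γ > 0 satisfy γ ≤ 2/(κ + L), let ζ ≥ 0, and let (w^(t)) be any sequence with w^(t+1) = w^(t) − γ·g^(t), where the vectors g^(t) ∈ ℝ^d satisfy ‖g^(t) − ∇F(w^(t))‖ ≤ ζ for all t. Set a = √(1 − 2γκL/(κ+L)). Then for every t ≥ 0: ‖w^(t+1) − w*‖ ≤ a^(t+1)·‖w^(0) − w*‖ + ζ·γ·(1 − a^(t+1))/(1 − a); in particular ‖w^(t+1) − w*‖ ≤ a^(t+1)·‖w^(0) − w*‖ + ζ·γ/(1 − a). -/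
open scoped RealInnerProductSpace

variable {E : Type*} [NormedAddCommGroup E] [InnerProductSpace ℝ E] [CompleteSpace E]

lemma descent_aux (F : E → ℝ) (hFdiff : Differentiable ℝ F) (L : ℝ) (hL : 0 < L)
    (hlip : ∀ u v : E, ‖gradient F u - gradient F v‖ ≤ L * ‖u - v‖) (x y : E) :
    F y - F x - ⟪gradient F x, y - x⟫ ≤ L / 2 * ‖y - x‖ ^ 2 := by
  set d := y - x with hd
  have hlipW : LipschitzWith (Real.toNNReal L) (gradient F) := by
    apply LipschitzWith.of_dist_le_mul
    intro u v
    rw [dist_eq_norm, dist_eq_norm, Real.coe_toNNReal L hL.le]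
    exact hlip u v
  have hcontgrad : Continuous (gradient F) := hlipW.continuous
  have hpath : ∀ t : ℝ, HasDerivAt (fun s : ℝ => x + s • d) d t := by
    intro t
    simpa using ((hasDerivAt_id t).smul_const d).const_add x
  have hderiv : ∀ t : ℝ,
      HasDerivAt (fun s : ℝ => F (x + s • d)) ⟪gradient F (x + t • d), d⟫ t := by
    intro t
    have hF := ((hFdiff (x + t • d)).hasGradientAt).hasFDerivAt
    have := hF.comp_hasDerivAt t (hpath t)
    simpa [InnerProductSpace.toDual_apply_apply, Function.comp_def] using this
  have hcont : Continuous fun t : ℝ => ⟪gradient F (x + t • d), d⟫ := by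
    exact (Continuous.inner (hcontgrad.comp (by continuity)) continuous_const)
  have hTfC : F y - F x = ∫ t in (0:ℝ)..1, ⟪gradient F (x + t • d), d⟫ := by
    rw [intervalIntegral.integral_eq_sub_of_hasDerivAt (fun t _ => hderiv t)
      (hcont.intervalIntegrable 0 1)]
    simp [hd]
  have hbound : ∀ t ∈ Set.Icc (0:ℝ) 1,
      ⟪gradient F (x + t • d), d⟫ ≤ ⟪gradient F x, d⟫ + L * t * ‖d‖ ^ 2 := by
    intro t ht
    have h1 : ⟪gradient F (x + t • d) - gradient F x, d⟫ ≤ L * t * ‖d‖ ^ 2 := by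
      calc ⟪gradient F (x + t • d) - gradient F x, d⟫
          ≤ ‖gradient F (x + t • d) - gradient F x‖ * ‖d‖ := real_inner_le_norm _ _
        _ ≤ (L * ‖(x + t • d) - x‖) * ‖d‖ :=
            mul_le_mul_of_nonneg_right (hlip _ _) (norm_nonneg d)
        _ = L * t * ‖d‖ ^ 2 := by
            have : (x + t • d) - x = t • d := by abel
            rw [this, norm_smul]
            simp [Real.norm_eq_abs, abs_of_nonneg ht.1]
            ring
    have := inner_sub_left (𝕜 := ℝ) (gradient F (x + t • d)) (gradient F x) d
    linarith [this ▸ h1]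
  have hInt : (∫ t in (0:ℝ)..1, ⟪gradient F (x + t • d), d⟫)
      ≤ ∫ t in (0:ℝ)..1, (⟪gradient F x, d⟫ + L * t * ‖d‖ ^ 2) := by
    apply intervalIntegral.integral_mono_on (by norm_num)
      (hcont.intervalIntegrable 0 1)
      ((by continuity : Continuous fun t : ℝ => ⟪gradient F x, d⟫ + L * t * ‖d‖ ^ 2).intervalIntegrable 0 1)
    exact hbound
  have hIntVal : (∫ t in (0:ℝ)..1, (⟪gradient F x, d⟫ + L * t * ‖d‖ ^ 2))
      = ⟪gradient F x, d⟫ + L / 2 * ‖d‖ ^ 2 := by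
    have hcongr : ∀ t ∈ Set.uIcc (0:ℝ) 1,
        ⟪gradient F x, d⟫ + L * t * ‖d‖ ^ 2 = ⟪gradient F x, d⟫ + (L * ‖d‖ ^ 2) * t :=
      fun t _ => by ring
    rw [intervalIntegral.integral_congr hcongr,
      intervalIntegral.integral_add (g := fun t : ℝ => L * ‖d‖ ^ 2 * t) (intervalIntegrable_const)
        ((continuous_const.mul continuous_id' : Continuous fun t : ℝ => L * ‖d‖ ^ 2 * t).intervalIntegrable 0 1),
      intervalIntegral.integral_const_mul, integral_id]
    simp
    ring
  rw [hTfC]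
  rw [hIntVal] at hInt
  linarith


lemma bregman_lower (F : E → ℝ) (L κ : ℝ) (hκ : 0 < κ) (hκL : κ < L)
    (hA : ∀ x y : E, F y - F x - ⟪gradient F x, y - x⟫ ≤ L / 2 * ‖y - x‖ ^ 2)
    (hsc : ∀ u v : E, (κ / 2) * ‖u - v‖ ^ 2 ≤ F u - F v - ⟪gradient F v, u - v⟫)
    (u v : E) :
    κ / 2 * ‖u - v‖ ^ 2 + 1 / (2 * (L - κ)) * ‖gradient F u - gradient F v - κ • (u - v)‖ ^ 2
      ≤ F u - F v - ⟪gradient F v, u - v⟫ := by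
  set M := L - κ with hM
  have hM0 : 0 < M := by rw [hM]; linarith
  have hMpos : (0:ℝ) < 1 / M := by positivity
  set d := u - v with hdd
  set p := gradient F u - gradient F v - κ • d with hp
  set u' := u - (1 / M) • p with hu'
  have fact1 := hsc u' v
  have fact2 := hA u u'
  have e1 : u' - u = -((1 / M) • p) := by rw [hu']; abel
  have e2 : u' - v = d - (1 / M) • p := by rw [hu', hdd]; abel
  have ip : ⟪gradient F u, p⟫ - ⟪gradient F v, p⟫ - κ * ⟪d, p⟫ = ‖p‖ ^ 2 := by
    have h1 : ⟪gradient F u - gradient F v - κ • d, p⟫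
        = ⟪gradient F u, p⟫ - ⟪gradient F v, p⟫ - κ * ⟪d, p⟫ := by
      rw [inner_sub_left, inner_sub_left, real_inner_smul_left]
    rw [← h1, ← hp, real_inner_self_eq_norm_sq]
  have n1 : ‖u' - u‖ ^ 2 = (1 / M)^2 * ‖p‖ ^ 2 := by
    rw [e1, norm_neg, norm_smul, Real.norm_eq_abs, abs_of_pos hMpos]
    ring
  have n2 : ‖u' - v‖ ^ 2 = ‖d‖ ^ 2 - 2 * (1 / M) * ⟪d, p⟫ + (1 / M)^2 * ‖p‖ ^ 2 := by
    rw [e2, norm_sub_sq_real, norm_smul, real_inner_smul_right, Real.norm_eq_abs,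
      abs_of_pos hMpos]
    ring
  have i1 : ⟪gradient F v, u' - v⟫ = ⟪gradient F v, d⟫ - (1 / M) * ⟪gradient F v, p⟫ := by
    rw [e2, inner_sub_right, real_inner_smul_right]
  have i2 : ⟪gradient F u, u' - u⟫ = -((1 / M) * ⟪gradient F u, p⟫) := by
    rw [e1, inner_neg_right, real_inner_smul_right]
  rw [i1, n2] at fact1
  rw [i2, n1] at fact2
  have hMc : M * (1 / M) = 1 := by field_simp
  have final : F u - F v - ⟪gradient F v, d⟫ - (κ/2 * ‖d‖^2 + 1/M * ‖p‖^2 / 2)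
      = ((F u' - F v - (⟪gradient F v, d⟫ - 1/M * ⟪gradient F v, p⟫))
          - κ/2 * (‖d‖^2 - 2*(1/M)*⟪d,p⟫ + (1/M)^2 * ‖p‖^2))
        + (L/2 * ((1/M)^2 * ‖p‖^2) - (F u' - F u - -(1/M * ⟪gradient F u, p⟫))) := by
    linear_combination (1/M) * ip + (-(1/M) * ‖p‖^2 / 2) * hMc
  have h2M : 1/(2*M) * ‖p‖^2 = 1/M * ‖p‖^2 / 2 := by
    field_simp
  linarith [fact1, fact2, final, h2M]


lemma master_ineq (F : E → ℝ) (L κ : ℝ) (hκ : 0 < κ) (hL : 0 < L)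
    (hlip : ∀ u v : E, ‖gradient F u - gradient F v‖ ≤ L * ‖u - v‖)
    (hA : ∀ x y : E, F y - F x - ⟪gradient F x, y - x⟫ ≤ L / 2 * ‖y - x‖ ^ 2)
    (hsc : ∀ u v : E, (κ / 2) * ‖u - v‖ ^ 2 ≤ F u - F v - ⟪gradient F v, u - v⟫)
    (u v : E) :
    ‖gradient F u - gradient F v‖ ^ 2 + κ * L * ‖u - v‖ ^ 2
      ≤ (κ + L) * ⟪gradient F u - gradient F v, u - v⟫ := by
  have h1 := hsc u v
  have h2 := hsc v u
  have hrev : ‖v - u‖ = ‖u - v‖ := norm_sub_rev _ _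
  have hinner : ⟪gradient F u - gradient F v, u - v⟫
      = -⟪gradient F v, u - v⟫ - ⟪gradient F u, v - u⟫ := by
    rw [inner_sub_left, show v - u = -(u - v) by abel, inner_neg_right]
    ring
  have hsum : κ * ‖u - v‖ ^ 2 ≤ ⟪gradient F u - gradient F v, u - v⟫ := by
    rw [hinner]; rw [hrev] at h2; linarith
  rcases le_or_gt L κ with hLκ | hκL
  · -- easy case L ≤ κ
    have hm : ‖gradient F u - gradient F v‖ ^ 2 ≤ L ^ 2 * ‖u - v‖ ^ 2 := by
      have := hlip u v
      nlinarith [norm_nonneg (gradient F u - gradient F v), norm_nonneg (u - v)]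
    nlinarith [hsum, hm, sq_nonneg ‖u - v‖, mul_le_mul_of_nonneg_left hsum (by linarith : (0:ℝ) ≤ κ + L),
      mul_nonneg (by nlinarith : (0:ℝ) ≤ κ^2 - L^2) (sq_nonneg ‖u - v‖)]
  · -- main case κ < L
    set M := L - κ with hM
    have hM0 : 0 < M := by rw [hM]; linarith
    have hb1 := bregman_lower F L κ hκ hκL hA hsc u v
    have hb2 := bregman_lower F L κ hκ hκL hA hsc v u
    have hpneg : gradient F v - gradient F u - κ • (v - u)
        = -(gradient F u - gradient F v - κ • (u - v)) := by
      rw [smul_sub, smul_sub]; abel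
    rw [hpneg, norm_neg, hrev] at hb2
    set p := gradient F u - gradient F v - κ • (u - v) with hp
    have hbr : 1/(2*(L-κ)) * ‖p‖^2 + 1/(2*(L-κ)) * ‖p‖^2 = 1 / M * ‖p‖^2 := by
      rw [hM]
      have hne : L - κ ≠ 0 := by linarith
      field_simp
      ring
    have hsum2 : κ * ‖u - v‖ ^ 2 + 1 / M * ‖p‖ ^ 2
        ≤ ⟪gradient F u - gradient F v, u - v⟫ := by
      rw [hinner]; linarith
    have hpn : ‖p‖ ^ 2 = ‖gradient F u - gradient F v‖ ^ 2
        - 2 * κ * ⟪gradient F u - gradient F v, u - v⟫ + κ ^ 2 * ‖u - v‖ ^ 2 := by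
      rw [hp, norm_sub_sq_real, real_inner_smul_right, norm_smul, Real.norm_eq_abs,
        abs_of_pos hκ]
      ring
    have h3 : M * (κ * ‖u - v‖ ^ 2) + M * (1 / M * ‖p‖ ^ 2)
        ≤ M * ⟪gradient F u - gradient F v, u - v⟫ := by
      nlinarith [hsum2, hM0]
    have h4 : M * (1 / M * ‖p‖ ^ 2) = ‖p‖ ^ 2 := by
      field_simp
    rw [h4] at h3
    rw [hpn] at h3
    have : M = L - κ := hM
    nlinarith [h3]

lemma contraction (F : E → ℝ) (L κ : ℝ) (hκ : 0 < κ) (hL : 0 < L)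
    (hlip : ∀ u v : E, ‖gradient F u - gradient F v‖ ≤ L * ‖u - v‖)
    (hA : ∀ x y : E, F y - F x - ⟪gradient F x, y - x⟫ ≤ L / 2 * ‖y - x‖ ^ 2)
    (hsc : ∀ u v : E, (κ / 2) * ‖u - v‖ ^ 2 ≤ F u - F v - ⟪gradient F v, u - v⟫)
    (wstar : E) (hgrad0 : gradient F wstar = 0)
    (γ : ℝ) (hγ0 : 0 < γ) (hγ : γ ≤ 2 / (κ + L)) (x : E) :
    ‖(x - wstar) - γ • gradient F x‖ ^ 2 ≤ (1 - 2 * γ * κ * L / (κ + L)) * ‖x - wstar‖ ^ 2 := by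
  have hκL0 : (0:ℝ) < κ + L := by linarith
  have hmaster := master_ineq F L κ hκ hL hlip hA hsc x wstar
  rw [hgrad0, sub_zero] at hmaster
  have hγ2 : γ * (κ + L) ≤ 2 := by
    rw [le_div_iff₀ hκL0] at hγ; linarith
  have hexp : ‖(x - wstar) - γ • gradient F x‖ ^ 2
      = ‖x - wstar‖ ^ 2 - 2 * γ * ⟪gradient F x, x - wstar⟫ + γ ^ 2 * ‖gradient F x‖ ^ 2 := by
    rw [norm_sub_sq_real, real_inner_smul_right, norm_smul, Real.norm_eq_abs, abs_of_pos hγ0,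
      real_inner_comm]
    ring
  rw [hexp]
  have hc : (1 - 2 * γ * κ * L / (κ + L)) * (κ + L) = (κ + L) - 2 * γ * κ * L := by
    field_simp
  have hm0 : (0:ℝ) ≤ ‖gradient F x‖ ^ 2 := sq_nonneg _
  have hn0 : (0:ℝ) ≤ ‖x - wstar‖ ^ 2 := sq_nonneg _
  nlinarith [hmaster, hc, hm0, hn0, hγ0, hκL0,
    mul_le_mul_of_nonneg_left hmaster (by linarith : (0:ℝ) ≤ 2 * γ),
    mul_nonneg (mul_nonneg hγ0.le hm0) (by linarith : (0:ℝ) ≤ 2 - γ * (κ + L))]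


/-- Inexact gradient descent on a `κ`-strongly convex function with
`L`-Lipschitz gradient: if `w^(t+1) = w^(t) - γ g^(t)` with `‖g^(t) - ∇F(w^(t))‖ ≤ ζ`
and `γ ≤ 2/(κ+L)`, then with `a = √(1 - 2γκL/(κ+L))`, for every `t`:
`‖w^(t+1) - w*‖ ≤ a^(t+1) ‖w^(0) - w*‖ + ζγ(1 - a^(t+1))/(1-a)`, and in particular
`‖w^(t+1) - w*‖ ≤ a^(t+1) ‖w^(0) - w*‖ + ζγ/(1-a)`. -/
theorem stmt19 (dim : ℕ) (F : EuclideanSpace ℝ (Fin dim) → ℝ)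
    (hFdiff : Differentiable ℝ F)
    (L κ : ℝ) (hL : 0 < L) (hκ : 0 < κ)
    (hlip : ∀ u v : EuclideanSpace ℝ (Fin dim),
      ‖gradient F u - gradient F v‖ ≤ L * ‖u - v‖)
    (hsc : ∀ u v : EuclideanSpace ℝ (Fin dim),
      (κ / 2) * ‖u - v‖ ^ 2 ≤ F u - F v - ⟪gradient F v, u - v⟫)
    (wstar : EuclideanSpace ℝ (Fin dim)) (hmin : ∀ w, F wstar ≤ F w)
    (γ : ℝ) (hγ0 : 0 < γ) (hγ : γ ≤ 2 / (κ + L))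
    (ζ : ℝ) (hζ : 0 ≤ ζ)
    (w g : ℕ → EuclideanSpace ℝ (Fin dim))
    (hupdate : ∀ t, w (t + 1) = w t - γ • g t)
    (herr : ∀ t, ‖g t - gradient F (w t)‖ ≤ ζ)
    (a : ℝ) (ha : a = Real.sqrt (1 - 2 * γ * κ * L / (κ + L))) :
    ∀ t : ℕ,
      ‖w (t + 1) - wstar‖ ≤
        a ^ (t + 1) * ‖w 0 - wstar‖ + ζ * γ * (1 - a ^ (t + 1)) / (1 - a) ∧
      ‖w (t + 1) - wstar‖ ≤ a ^ (t + 1) * ‖w 0 - wstar‖ + ζ * γ / (1 - a) := by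
  have hκL0 : (0:ℝ) < κ + L := by linarith
  have hγ2 : γ * (κ + L) ≤ 2 := by
    rw [le_div_iff₀ hκL0] at hγ; linarith
  -- the contraction constant
  set c : ℝ := 1 - 2 * γ * κ * L / (κ + L) with hcdef
  have hc0 : 0 ≤ c := by
    rw [hcdef]
    rw [sub_nonneg, div_le_one hκL0]
    nlinarith [sq_nonneg (κ - L), mul_pos hκ hL]
  have hc1 : c < 1 := by
    rw [hcdef]
    have : 0 < 2 * γ * κ * L / (κ + L) := by positivity
    linarith
  have ha0 : 0 ≤ a := ha ▸ Real.sqrt_nonneg _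
  have ha2 : a ^ 2 = c := by rw [ha, Real.sq_sqrt hc0]
  have ha1 : a < 1 := by nlinarith [ha2, hc1, ha0]
  have h1a : 0 < 1 - a := by linarith
  -- gradient vanishes at the minimizer
  have hgrad0 : gradient F wstar = 0 := by
    have hloc : IsLocalMin F wstar := Filter.Eventually.of_forall hmin
    simp [gradient, hloc.fderiv_eq_zero]
  -- descent lemma
  have hA : ∀ x y : EuclideanSpace ℝ (Fin dim),
      F y - F x - ⟪gradient F x, y - x⟫ ≤ L / 2 * ‖y - x‖ ^ 2 :=
    descent_aux F hFdiff L hL hlip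
  -- one-step contraction
  have hstep : ∀ t, ‖w (t + 1) - wstar‖ ≤ a * ‖w t - wstar‖ + ζ * γ := by
    intro t
    have hco := contraction F L κ hκ hL hlip hA hsc wstar hgrad0 γ hγ0 hγ (w t)
    have hco' : ‖(w t - wstar) - γ • gradient F (w t)‖ ≤ a * ‖w t - wstar‖ := by
      have hsq : ‖(w t - wstar) - γ • gradient F (w t)‖ ^ 2 ≤ (a * ‖w t - wstar‖) ^ 2 := by
        rw [mul_pow, ha2]; exact hco
      have := Real.sqrt_le_sqrt hsq
      rwa [Real.sqrt_sq (norm_nonneg _), Real.sqrt_sq (by positivity)] at this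
    have hdecomp : w (t + 1) - wstar
        = ((w t - wstar) - γ • gradient F (w t)) - γ • (g t - gradient F (w t)) := by
      rw [hupdate t, smul_sub]; abel
    calc ‖w (t + 1) - wstar‖
        ≤ ‖(w t - wstar) - γ • gradient F (w t)‖ + ‖γ • (g t - gradient F (w t))‖ := by
          rw [hdecomp]; exact norm_sub_le _ _
      _ ≤ a * ‖w t - wstar‖ + ζ * γ := by
          have : ‖γ • (g t - gradient F (w t))‖ = γ * ‖g t - gradient F (w t)‖ := by
            rw [norm_smul, Real.norm_eq_abs, abs_of_pos hγ0]
          rw [this]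
          have := herr t
          nlinarith [hco']
  -- induction
  intro t
  have main : ∀ s : ℕ, ‖w s - wstar‖ ≤ a ^ s * ‖w 0 - wstar‖ + ζ * γ * (1 - a ^ s) / (1 - a) := by
    intro s
    induction s with
    | zero => simp
    | succ n ih =>
      have h1 := hstep n
      have h2 : a * ‖w n - wstar‖ ≤ a * (a ^ n * ‖w 0 - wstar‖ + ζ * γ * (1 - a ^ n) / (1 - a)) :=
        mul_le_mul_of_nonneg_left ih ha0
      have h3 : a * (a ^ n * ‖w 0 - wstar‖ + ζ * γ * (1 - a ^ n) / (1 - a)) + ζ * γ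
          = a ^ (n + 1) * ‖w 0 - wstar‖ + ζ * γ * (1 - a ^ (n + 1)) / (1 - a) := by
        have hne : 1 - a ≠ 0 := ne_of_gt h1a
        field_simp
        ring
      linarith
  refine ⟨main (t + 1), ?_⟩
  have h4 : ζ * γ * (1 - a ^ (t + 1)) / (1 - a) ≤ ζ * γ / (1 - a) := by
    rw [div_le_div_iff₀ h1a h1a]
    nlinarith [mul_nonneg (mul_nonneg (mul_nonneg hζ hγ0.le) (pow_nonneg ha0 (t + 1))) h1a.le]
  linarith [main (t + 1), h4]
end
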